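/- Define a map Ψ_n : S_{n+1} → S_n as follows. For β ∈ S_{n+1}, form the graph Q̂_β on vertices {1,...,n+2} by taking arrows i → β(i) for i in {1,...,n+1} and replacing the arrow out of 1 by an arrow out of n+2 with the same target. Let a be the arrow with source n+2 and b the arrow with target n+1 in Q̂_β; delete a and b (if a = b just delete it), add an arrow from s(b) to t(a) if a ≠ b, and delete vertex n+2. The resulting graph is Q̂_α for a unique α ∈ S_n, and the map Ψ_n(β) = α is a well-defined (n+1)-to-1 surjection: every α ∈ S_n has exactly n+1 preimages. -/

import Mathlib

/-- The deletion construction `Ψ` (here `S_{n+2}` acts on `Fin (n+2) = {0,…,n+1}`, the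
paper's distinguished element `1` is `0` and the paper's `n+2` is the extra virtual
vertex; `Fin.last (m+1)` plays the role of the paper's vertex `n+1`).  `PsiRel β α`
says that the quiver obtained from `Q̂_β` by deleting the arrow out of the virtual
vertex and the arrow into the top vertex (gluing them when distinct) is `Q̂_α`:
the out-arrow of the top vertex of `Q̂_α` is encoded by `α 0`, and for `v ≠ 0` the
arrow `v → α v` comes from `Q̂_β`, with the glued arrow replacing the one that
targeted the top vertex. -/
def PsiRel {m : ℕ} (β : Equiv.Perm (Fin (m + 2))) (α : Equiv.Perm (Fin (m + 1))) : Prop :=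
  (Fin.castSucc (α 0) =
    if β (Fin.last (m + 1)) = Fin.last (m + 1) then β 0 else β (Fin.last (m + 1))) ∧
  ∀ v : Fin (m + 1), v ≠ 0 →
    Fin.castSucc (α v) =
      if Fin.castSucc v = β⁻¹ (Fin.last (m + 1)) then β 0 else β (Fin.castSucc v)

namespace PsiAux

open Equiv Fin

variable {m : ℕ}

/-- Extend a permutation of `Fin (m+1)` to `Fin (m+2)` fixing the last element. -/
def ext (α : Perm (Fin (m + 1))) : Perm (Fin (m + 2)) where
  toFun := Fin.lastCases (Fin.last (m + 1)) (fun v => (α v).castSucc)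
  invFun := Fin.lastCases (Fin.last (m + 1)) (fun v => (α⁻¹ v).castSucc)
  left_inv x := by
    cases x using Fin.lastCases with
    | last => simp
    | cast v => simp
  right_inv x := by
    cases x using Fin.lastCases with
    | last => simp
    | cast v => simp

@[simp] lemma ext_last (α : Perm (Fin (m + 1))) :
    ext α (Fin.last (m + 1)) = Fin.last (m + 1) := by
  simp [ext]

@[simp] lemma ext_castSucc (α : Perm (Fin (m + 1))) (v : Fin (m + 1)) :
    ext α v.castSucc = (α v).castSucc := by
  simp [ext]

@[simp] lemma ext_inv_last (α : Perm (Fin (m + 1))) :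
    (ext α)⁻¹ (Fin.last (m + 1)) = Fin.last (m + 1) := by
  rw [Perm.inv_eq_iff_eq, ext_last]

/-- The gluing permutation attached to the parameter `c`. -/
def pic (c : Fin (m + 2)) : Perm (Fin (m + 2)) :=
  if c = Fin.last (m + 1) then 1 else swap 0 c * swap c (Fin.last (m + 1))

lemma last_ne_zero' : (Fin.last (m + 1) : Fin (m + 2)) ≠ 0 :=
  (Fin.last_pos).ne'

lemma pic_apply_last (c : Fin (m + 2)) :
    pic c (Fin.last (m + 1)) = if c = Fin.last (m + 1) then Fin.last (m + 1) else 0 := by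
  unfold pic
  split
  · simp
  · simp [Perm.mul_apply, swap_apply_right]

lemma pic_apply_self {c : Fin (m + 2)} (h : c ≠ Fin.last (m + 1)) :
    pic c c = Fin.last (m + 1) := by
  rw [pic, if_neg h, Perm.mul_apply, swap_apply_left,
    swap_apply_of_ne_of_ne last_ne_zero' (Ne.symm h)]

lemma pic_apply_castSucc {c : Fin (m + 2)} (h : c ≠ Fin.last (m + 1)) (v : Fin (m + 1)) :
    pic c v.castSucc =
      if v.castSucc = c then Fin.last (m + 1) else if v = 0 then c else v.castSucc := by
  rw [pic, if_neg h, Perm.mul_apply]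
  by_cases h1 : v.castSucc = c
  · rw [if_pos h1, h1, swap_apply_left,
      swap_apply_of_ne_of_ne last_ne_zero' (Ne.symm h)]
  · rw [if_neg h1, swap_apply_of_ne_of_ne h1 (castSucc_lt_last v).ne]
    by_cases h2 : v = 0
    · rw [if_pos h2, h2, castSucc_zero, swap_apply_left]
    · rw [if_neg h2, swap_apply_of_ne_of_ne
        (by simpa [Fin.castSucc_eq_zero_iff] using h2) h1]

lemma pic_inv_last (c : Fin (m + 2)) : (pic c)⁻¹ (Fin.last (m + 1)) = c := by
  rw [Perm.inv_eq_iff_eq]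
  by_cases h : c = Fin.last (m + 1)
  · rw [h, pic_apply_last, if_pos rfl]
  · rw [pic_apply_self h]

/-- The explicit preimage of `α` attached to parameter `c`. -/
def bof (α : Perm (Fin (m + 1))) (c : Fin (m + 2)) : Perm (Fin (m + 2)) :=
  ext α * pic c

lemma bof_inv_last (α : Perm (Fin (m + 1))) (c : Fin (m + 2)) :
    (bof α c)⁻¹ (Fin.last (m + 1)) = c := by
  rw [bof, mul_inv_rev, Perm.mul_apply, ext_inv_last, pic_inv_last]

lemma bof_apply_last (α : Perm (Fin (m + 1))) (c : Fin (m + 2)) :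
    bof α c (Fin.last (m + 1)) =
      if c = Fin.last (m + 1) then Fin.last (m + 1) else (α 0).castSucc := by
  rw [bof, Perm.mul_apply, pic_apply_last]
  split
  · simp
  · rw [show (0 : Fin (m + 2)) = (0 : Fin (m + 1)).castSucc by simp, ext_castSucc]

lemma bof_apply_castSucc (α : Perm (Fin (m + 1))) {c : Fin (m + 2)}
    (h : c ≠ Fin.last (m + 1)) (v : Fin (m + 1)) :
    bof α c v.castSucc =
      if v.castSucc = c then Fin.last (m + 1)
      else if v = 0 then ext α c else (α v).castSucc := by
  rw [bof, Perm.mul_apply, pic_apply_castSucc h]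
  split
  · simp
  · split <;> simp

lemma psiRel_bof (α : Perm (Fin (m + 1))) (c : Fin (m + 2)) : PsiRel (bof α c) α := by
  have hβL := bof_apply_last α c
  have hβinv := bof_inv_last α c
  constructor
  · by_cases h : c = Fin.last (m + 1)
    · rw [hβL, if_pos h, if_pos rfl, bof, Perm.mul_apply, pic, if_pos h]
      rw [show ((1 : Perm (Fin (m+2))) 0) = (0 : Fin (m + 1)).castSucc by simp, ext_castSucc]
    · rw [hβL, if_neg h, if_neg (castSucc_lt_last (α 0)).ne]
  · intro v hv
    rw [hβinv]
    by_cases h1 : v.castSucc = c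
    · have hc : c ≠ Fin.last (m + 1) := h1 ▸ (castSucc_lt_last v).ne
      rw [if_pos h1, show (0 : Fin (m + 2)) = (0 : Fin (m + 1)).castSucc by simp,
        bof_apply_castSucc α hc]
      rw [if_neg (by
        rw [castSucc_zero]
        intro h0
        exact hv (by simpa [Fin.castSucc_eq_zero_iff] using h1.trans h0.symm)),
        if_pos rfl, ← h1, ext_castSucc]
    · rw [if_neg h1]
      by_cases hc : c = Fin.last (m + 1)
      · rw [bof, Perm.mul_apply, pic, if_pos hc]
        simp
      · rw [bof_apply_castSucc α hc, if_neg h1, if_neg hv]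

/-- Restrict a permutation fixing the last element. -/
def res (σ : Perm (Fin (m + 2))) (hσ : σ (Fin.last (m + 1)) = Fin.last (m + 1)) :
    Perm (Fin (m + 1)) where
  toFun v := (σ v.castSucc).castPred (by
    intro h
    exact (castSucc_lt_last v).ne (σ.injective (h.trans hσ.symm)))
  invFun v := (σ⁻¹ v.castSucc).castPred (by
    intro h
    have hσ' : σ⁻¹ (Fin.last (m + 1)) = Fin.last (m + 1) := by
      rw [Perm.inv_eq_iff_eq, hσ]
    exact (castSucc_lt_last v).ne (σ⁻¹.injective (h.trans hσ'.symm)))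
  left_inv v := by
    apply castSucc_injective
    simp [Fin.castSucc_castPred]
  right_inv v := by
    apply castSucc_injective
    simp [Fin.castSucc_castPred]

lemma ext_res (σ : Perm (Fin (m + 2))) (hσ : σ (Fin.last (m + 1)) = Fin.last (m + 1)) :
    ext (res σ hσ) = σ := by
  apply Equiv.ext
  intro x
  cases x using Fin.lastCases with
  | last => rw [ext_last, hσ]
  | cast v =>
    rw [ext_castSucc]
    simp [res, Fin.castSucc_castPred]

lemma exists_bof (β : Perm (Fin (m + 2))) :
    ∃ α : Perm (Fin (m + 1)), β = bof α (β⁻¹ (Fin.last (m + 1))) := by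
  set c := β⁻¹ (Fin.last (m + 1)) with hc
  have hσ : (β * (pic c)⁻¹) (Fin.last (m + 1)) = Fin.last (m + 1) := by
    rw [Perm.mul_apply, pic_inv_last, hc]
    exact β.apply_symm_apply _
  refine ⟨res _ hσ, ?_⟩
  rw [bof, ext_res]
  group

lemma psiRel_unique (β : Perm (Fin (m + 2))) (α₁ α₂ : Perm (Fin (m + 1)))
    (h₁ : PsiRel β α₁) (h₂ : PsiRel β α₂) : α₁ = α₂ := by
  apply Equiv.ext
  intro v
  apply castSucc_injective
  by_cases hv : v = 0
  · rw [hv, h₁.1, h₂.1]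
  · rw [h₁.2 v hv, h₂.2 v hv]

lemma psiRel_iff (β : Perm (Fin (m + 2))) (α : Perm (Fin (m + 1))) :
    PsiRel β α ↔ β = bof α (β⁻¹ (Fin.last (m + 1))) := by
  constructor
  · intro h
    obtain ⟨α₀, hα₀⟩ := exists_bof β
    have h0 : PsiRel β α₀ := by rw [hα₀]; rw [hα₀, bof_inv_last]; exact psiRel_bof _ _
    rw [psiRel_unique β α α₀ h h0]
    exact hα₀
  · intro h
    rw [h]; rw [h, bof_inv_last]; exact psiRel_bof _ _

end PsiAux

/-- `Ψ : S_{n+2} → S_{n+1}` is well defined (each `β` determines a unique `α`), and it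
is an `(n+2)`-to-one surjection: every `α` has exactly `n+2` preimages. -/
theorem psi_well_defined_and_card_fiber (n : ℕ) :
    (∀ β : Equiv.Perm (Fin (n + 2)), ∃! α : Equiv.Perm (Fin (n + 1)), PsiRel β α) ∧
    ∀ α : Equiv.Perm (Fin (n + 1)),
      Nat.card {β : Equiv.Perm (Fin (n + 2)) // PsiRel β α} = n + 2 := by
  constructor
  · intro β
    obtain ⟨α₀, hα₀⟩ := PsiAux.exists_bof β
    have h0 : PsiRel β α₀ := (PsiAux.psiRel_iff β α₀).2 hα₀
    exact ⟨α₀, h0, fun y hy => PsiAux.psiRel_unique β y α₀ hy h0⟩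
  · intro α
    have hbij : Function.Bijective
        (fun c : Fin (n + 2) => (⟨PsiAux.bof α c, PsiAux.psiRel_bof α c⟩ :
          {β : Equiv.Perm (Fin (n + 2)) // PsiRel β α})) := by
      constructor
      · intro c₁ c₂ h
        have := congrArg (fun x : {β : Equiv.Perm (Fin (n + 2)) // PsiRel β α} =>
          (x.1)⁻¹ (Fin.last (n + 1))) h
        simpa [PsiAux.bof_inv_last] using this
      · rintro ⟨β, hβ⟩
        refine ⟨β⁻¹ (Fin.last (n + 1)), ?_⟩
        ext1
        exact ((PsiAux.psiRel_iff β α).1 hβ).symm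
    rw [← Nat.card_eq_of_bijective _ hbij]
    simp
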